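/- The set of tuples (φ_1, ..., φ_{d^2}) of vectors in ℂ^d for which the outer products φ_1φ_1*, ..., φ_{d^2}φ_{d^2}* span the real vector space of d×d Hermitian matrices is open and dense in (ℂ^d)^{d^2}. -/

import Mathlib

/-- The outer product `x x*` of a vector `x ∈ ℂ^d` with itself:
the `d × d` matrix whose `(j,k)` entry is `x j * conj (x k)`. -/
def outer {d : ℕ} (x : EuclideanSpace ℂ (Fin d)) : Matrix (Fin d) (Fin d) ℂ :=
  Matrix.of fun j k => x j * starRingEnd ℂ (x k)

open Matrix Complex Polynomial

namespace Stmt1Aux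
variable {d n : ℕ}

/-! ### Basic facts about `outer` and pairings -/

lemma outer_mem (x : EuclideanSpace ℂ (Fin d)) :
    outer x ∈ selfAdjoint.submodule ℝ (Matrix (Fin d) (Fin d) ℂ) := by
  show star _ = _
  ext j k
  simp [outer, Matrix.star_apply, mul_comm]

noncomputable def Pc (A B : Matrix (Fin d) (Fin d) ℂ) : ℂ :=
  ∑ j, ∑ k, starRingEnd ℂ (A j k) * B j k

noncomputable def ip (x y : EuclideanSpace ℂ (Fin d)) : ℂ :=
  ∑ k, starRingEnd ℂ (x k) * y k

lemma ip_comm (x y : EuclideanSpace ℂ (Fin d)) : ip y x = starRingEnd ℂ (ip x y) := by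
  simp [ip, map_sum, mul_comm]

lemma Pc_conj (A B : Matrix (Fin d) (Fin d) ℂ) : Pc B A = starRingEnd ℂ (Pc A B) := by
  simp [Pc, map_sum, mul_comm]

lemma Pc_outer (x y : EuclideanSpace ℂ (Fin d)) :
    Pc (outer x) (outer y) = ip x y * ip y x := by
  simp only [Pc, outer, ip, Matrix.of_apply]
  rw [Finset.sum_mul_sum]
  refine Finset.sum_congr rfl fun j _ => Finset.sum_congr rfl fun k _ => ?_
  rw [_root_.map_mul, RingHomCompTriple.comp_apply, RingHom.id_apply]
  ring

lemma Pc_self (A : Matrix (Fin d) (Fin d) ℂ) :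
    Pc A A = ((∑ j, ∑ k, Complex.normSq (A j k) : ℝ) : ℂ) := by
  push_cast
  refine Finset.sum_congr rfl fun j _ => Finset.sum_congr rfl fun k _ => ?_
  rw [mul_comm, Complex.mul_conj]

lemma Pc_self_eq_zero {A : Matrix (Fin d) (Fin d) ℂ} (h : Pc A A = 0) : A = 0 := by
  rw [Pc_self] at h
  norm_cast at h
  have h2 : ∀ j ∈ Finset.univ, ∀ k ∈ Finset.univ, Complex.normSq (A j k) = 0 := by
    intro j _ k _
    have := (Finset.sum_eq_zero_iff_of_nonneg (fun j _ =>
      Finset.sum_nonneg fun k _ => Complex.normSq_nonneg _)).mp h j (Finset.mem_univ j)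
    exact (Finset.sum_eq_zero_iff_of_nonneg fun k _ => Complex.normSq_nonneg _).mp this k
      (Finset.mem_univ k)
  ext j k
  simpa using Complex.normSq_eq_zero.mp (h2 j (Finset.mem_univ j) k (Finset.mem_univ k))

/-! ### The Gram matrix criterion -/

noncomputable def gram (x : Fin n → EuclideanSpace ℂ (Fin d)) : Matrix (Fin n) (Fin n) ℝ :=
  Matrix.of fun i j => (ip (x i) (x j) * ip (x j) (x i)).re

lemma coe_gram (x : Fin n → EuclideanSpace ℂ (Fin d)) (i j : Fin n) :
    ((gram x i j : ℝ) : ℂ) = ip (x i) (x j) * ip (x j) (x i) := by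
  rw [gram, Matrix.of_apply, ip_comm (x i) (x j), Complex.mul_conj]
  simp

lemma Pc_outer' (x : Fin n → EuclideanSpace ℂ (Fin d)) (i j : Fin n) :
    Pc (outer (x i)) (outer (x j)) = ((gram x i j : ℝ) : ℂ) := by
  rw [Pc_outer, coe_gram]

lemma Pc_left_sum (c : Fin n → ℝ) (A : Fin n → Matrix (Fin d) (Fin d) ℂ)
    (B : Matrix (Fin d) (Fin d) ℂ) :
    Pc B (∑ i, c i • A i) = ∑ i, (c i : ℂ) * Pc B (A i) := by
  calc Pc B (∑ i, c i • A i)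
      = ∑ j, ∑ k, ∑ i, (c i : ℂ) * (starRingEnd ℂ (B j k) * A i j k) := by
        refine Finset.sum_congr rfl fun j _ => Finset.sum_congr rfl fun k _ => ?_
        rw [Matrix.sum_apply, Finset.mul_sum]
        refine Finset.sum_congr rfl fun i _ => ?_
        rw [Matrix.smul_apply, Complex.real_smul]
        ring
    _ = ∑ j, ∑ i, ∑ k, (c i : ℂ) * (starRingEnd ℂ (B j k) * A i j k) :=
        Finset.sum_congr rfl fun j _ => Finset.sum_comm
    _ = ∑ i, ∑ j, ∑ k, (c i : ℂ) * (starRingEnd ℂ (B j k) * A i j k) :=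
        Finset.sum_comm
    _ = ∑ i, (c i : ℂ) * Pc B (A i) := by
        refine Finset.sum_congr rfl fun i _ => ?_
        rw [Pc, Finset.mul_sum]
        exact Finset.sum_congr rfl fun j _ => (Finset.mul_sum _ _ _).symm

lemma row_zero (x : Fin n → EuclideanSpace ℂ (Fin d)) (c : Fin n → ℝ)
    (hc : ∑ i, c i • outer (x i) = 0) : gram x *ᵥ c = 0 := by
  funext j
  have h0 : Pc (outer (x j)) (∑ i, c i • outer (x i)) = 0 := by
    rw [hc]; simp [Pc]
  rw [Pc_left_sum] at h0
  simp only [Pc_outer'] at h0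
  have h1 : ((∑ i, c i * gram x j i : ℝ) : ℂ) = 0 := by push_cast; exact h0
  have h2 := Complex.ofReal_eq_zero.mp h1
  simp only [Matrix.mulVec, dotProduct, Pi.zero_apply]
  rw [← h2]
  exact Finset.sum_congr rfl fun i _ => mul_comm _ _

lemma gram_det_ne_zero_iff (x : Fin n → EuclideanSpace ℂ (Fin d)) :
    (gram x).det ≠ 0 ↔ LinearIndependent ℝ (fun i => outer (x i)) := by
  constructor
  · intro hdet
    rw [Fintype.linearIndependent_iff]
    intro c hc i0
    by_contra hne
    exact hdet ((Matrix.exists_mulVec_eq_zero_iff).mp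
      ⟨c, fun h => hne (congrFun h i0), row_zero x c hc⟩)
  · intro hli hdet
    obtain ⟨v, hv, hmv⟩ := (Matrix.exists_mulVec_eq_zero_iff).mpr hdet
    have hrow : ∀ i, Pc (outer (x i)) (∑ i', v i' • outer (x i')) = 0 := by
      intro i
      rw [Pc_left_sum]
      simp only [Pc_outer']
      have h1 : ((∑ i', gram x i i' * v i' : ℝ) : ℂ) = (((gram x *ᵥ v) i : ℝ) : ℂ) := rfl
      rw [hmv] at h1
      simp only [Pi.zero_apply, Complex.ofReal_zero] at h1
      push_cast at h1 ⊢
      rw [← h1]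
      exact Finset.sum_congr rfl fun i' _ => mul_comm _ _
    have h0 : Pc (∑ i, v i • outer (x i)) (∑ i, v i • outer (x i)) = 0 := by
      rw [Pc_left_sum]
      refine Finset.sum_eq_zero fun i _ => ?_
      rw [Pc_conj, hrow i]
      simp
    have hz := Pc_self_eq_zero h0
    exact hv (funext (Fintype.linearIndependent_iff.mp hli v hz))

/-! ### The Gram determinant along a line is a polynomial -/

noncomputable def sp (a b : Fin n → EuclideanSpace ℂ (Fin d)) (i j : Fin n) : Polynomial ℂ :=
  ∑ k, (C (starRingEnd ℂ (a i k)) + C (starRingEnd ℂ (b i k)) * X) *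
    (C (a j k) + C (b j k) * X)

lemma sp_eval (a b : Fin n → EuclideanSpace ℂ (Fin d)) (i j : Fin n) (t : ℝ) :
    (sp a b i j).eval (t : ℂ) = ip (a i + t • b i) (a j + t • b j) := by
  rw [sp, eval_finset_sum, ip]
  refine Finset.sum_congr rfl fun k _ => ?_
  have ha : (a i + t • b i) k = a i k + (t : ℂ) * b i k := by
    simp [PiLp.add_apply, PiLp.smul_apply, Complex.real_smul]
  have hb : (a j + t • b j) k = a j k + (t : ℂ) * b j k := by
    simp [PiLp.add_apply, PiLp.smul_apply, Complex.real_smul]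
  rw [ha, hb, RingHom.map_add, RingHom.map_mul, Complex.conj_ofReal]
  simp [eval_mul, eval_add, eval_C, eval_X]
  ring

noncomputable def pmat (a b : Fin n → EuclideanSpace ℂ (Fin d)) :
    Matrix (Fin n) (Fin n) (Polynomial ℂ) :=
  Matrix.of fun i j => sp a b i j * sp a b j i

lemma pmat_det_eval (a b : Fin n → EuclideanSpace ℂ (Fin d)) (t : ℝ) :
    (pmat a b).det.eval (t : ℂ) = ((gram (fun i => a i + t • b i)).det : ℂ) := by
  have h1 : (pmat a b).det.eval (t : ℂ)
      = ((pmat a b).map (evalRingHom (t : ℂ))).det := by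
    rw [← RingHom.mapMatrix_apply, ← RingHom.map_det]; rfl
  have h2 : ((gram (fun i => a i + t • b i)).det : ℂ)
      = ((gram (fun i => a i + t • b i)).map Complex.ofRealHom).det := by
    rw [← RingHom.mapMatrix_apply, ← RingHom.map_det]; rfl
  rw [h1, h2]
  congr 1
  ext i j
  simp only [Matrix.map_apply, pmat, Matrix.of_apply, coe_evalRingHom, eval_mul,
    Complex.ofRealHom_eq_coe]
  rw [sp_eval, sp_eval, coe_gram]

/-! ### Dimension of the self-adjoint matrices -/

instance : FiniteDimensional ℝ (Matrix (Fin d) (Fin d) ℂ) :=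
  Module.Finite.trans ℂ (Matrix (Fin d) (Fin d) ℂ)

lemma mem_self_iff (A : Matrix (Fin d) (Fin d) ℂ) :
    A ∈ selfAdjoint.submodule ℝ (Matrix (Fin d) (Fin d) ℂ) ↔ star A = A := Iff.rfl

lemma mem_skew_iff (A : Matrix (Fin d) (Fin d) ℂ) :
    A ∈ skewAdjoint.submodule ℝ (Matrix (Fin d) (Fin d) ℂ) ↔ star A = -A := Iff.rfl

noncomputable def Jeq : Matrix (Fin d) (Fin d) ℂ ≃ₗ[ℝ] Matrix (Fin d) (Fin d) ℂ :=
  (LinearEquiv.smulOfNeZero ℂ (Matrix (Fin d) (Fin d) ℂ) Complex.I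
    Complex.I_ne_zero).restrictScalars ℝ

lemma Jeq_apply (A : Matrix (Fin d) (Fin d) ℂ) : Jeq A = Complex.I • A := rfl

lemma map_self_eq_skew :
    (selfAdjoint.submodule ℝ (Matrix (Fin d) (Fin d) ℂ)).map
        (Jeq.toLinearMap : Matrix (Fin d) (Fin d) ℂ →ₗ[ℝ] Matrix (Fin d) (Fin d) ℂ)
      = skewAdjoint.submodule ℝ (Matrix (Fin d) (Fin d) ℂ) := by
  ext A
  simp only [Submodule.mem_map]
  constructor
  · rintro ⟨B, hB, rfl⟩
    rw [mem_self_iff] at hB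
    show _ ∈ _
    rw [mem_skew_iff]
    show star (Jeq B) = -(Jeq B)
    rw [Jeq_apply, star_smul, Complex.star_def, Complex.conj_I, hB, neg_smul]
  · intro hA
    rw [mem_skew_iff] at hA
    refine ⟨(-Complex.I) • A, ?_, ?_⟩
    · rw [mem_self_iff, star_smul, Complex.star_def, map_neg, Complex.conj_I, neg_neg,
        hA, smul_neg, neg_smul]
    · show Jeq _ = A
      rw [Jeq_apply, smul_smul]
      simp

lemma isCompl_self_skew :
    IsCompl (selfAdjoint.submodule ℝ (Matrix (Fin d) (Fin d) ℂ))
      (skewAdjoint.submodule ℝ (Matrix (Fin d) (Fin d) ℂ)) := by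
  constructor
  · rw [Submodule.disjoint_def]
    intro A hK hL
    rw [mem_self_iff] at hK
    rw [mem_skew_iff] at hL
    rw [hK] at hL
    ext j k
    have h := congr_fun (congr_fun hL j) k
    rw [Matrix.neg_apply] at h
    simpa using self_eq_neg.mp h
  · rw [codisjoint_iff, eq_top_iff]
    intro A _
    rw [Submodule.mem_sup]
    refine ⟨(1/2 : ℝ) • (A + star A), ?_, (1/2 : ℝ) • (A - star A), ?_, ?_⟩
    · rw [mem_self_iff, star_smul, star_trivial, star_add, star_star, add_comm]
    · rw [mem_skew_iff, star_smul, star_trivial, star_sub, star_star, ← smul_neg, neg_sub]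
    · rw [← smul_add]
      rw [show A + star A + (A - star A) = (2 : ℝ) • A by module]
      rw [smul_smul]
      norm_num

lemma finrank_self_adjoint :
    Module.finrank ℝ (selfAdjoint.submodule ℝ (Matrix (Fin d) (Fin d) ℂ)) = d ^ 2 := by
  have h1 := Submodule.finrank_add_eq_of_isCompl (isCompl_self_skew (d := d))
  have h2 : Module.finrank ℝ (selfAdjoint.submodule ℝ (Matrix (Fin d) (Fin d) ℂ))
      = Module.finrank ℝ (skewAdjoint.submodule ℝ (Matrix (Fin d) (Fin d) ℂ)) := by
    rw [← map_self_eq_skew]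
    exact (Jeq.submoduleMap _).finrank_eq
  have h3 : Module.finrank ℝ (Matrix (Fin d) (Fin d) ℂ) = 2 * (d * d) := by
    rw [Module.finrank_matrix (R := ℝ) (M := ℂ) (Fin d) (Fin d),
      Complex.finrank_real_complex]
    simp [mul_comm]
  rw [h3, ← h2] at h1
  rw [pow_two]
  omega

/-! ### Existence of a good tuple -/

lemma rank_one_decomp (U : Matrix (Fin d) (Fin d) ℂ) (f : Fin d → ℝ) :
    U * Matrix.diagonal (fun i => (f i : ℂ)) * Uᴴ
      = ∑ i, f i • outer (WithLp.toLp 2 fun j => U j i) := by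
  ext j k
  rw [Matrix.sum_apply]
  rw [Matrix.mul_apply]
  refine Finset.sum_congr rfl fun i _ => ?_
  rw [Matrix.mul_diagonal, Matrix.conjTranspose_apply, Matrix.smul_apply]
  show _ = (f i : ℂ) * (outer (WithLp.toLp 2 fun j => U j i) j k)
  rw [outer, Matrix.of_apply]
  rw [PiLp.toLp_apply, PiLp.toLp_apply]
  rw [show star (U k i) = starRingEnd ℂ (U k i) from rfl]
  ring

lemma span_outer_eq :
    Submodule.span ℝ (Set.range (outer (d := d)))
      = selfAdjoint.submodule ℝ (Matrix (Fin d) (Fin d) ℂ) := by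
  apply le_antisymm
  · rw [Submodule.span_le]
    rintro A ⟨x, rfl⟩
    exact outer_mem x
  · intro A hA
    have hA' : A.IsHermitian := hA
    have hdecomp := hA'.spectral_theorem
    have : A = ∑ i, hA'.eigenvalues i •
        outer (WithLp.toLp 2 fun j => (hA'.eigenvectorUnitary : Matrix (Fin d) (Fin d) ℂ) j i) := by
      rw [← rank_one_decomp]
      rw [Unitary.conjStarAlgAut_apply] at hdecomp
      exact hdecomp
    rw [this]
    exact Submodule.sum_mem _ fun i _ => Submodule.smul_mem _ _
      (Submodule.subset_span ⟨_, rfl⟩)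

lemma exists_good :
    ∃ ψ : Fin (d ^ 2) → EuclideanSpace ℂ (Fin d),
      LinearIndependent ℝ (fun i => outer (ψ i)) := by
  obtain ⟨s, hsub, hsp, hli⟩ :=
    exists_linearIndependent ℝ (Set.range (outer (d := d)))
  have hfin : s.Finite := hli.setFinite
  haveI := hfin.fintype
  have hcard : Fintype.card s = d ^ 2 := by
    have h1 := finrank_span_set_eq_card hli
    rw [hsp, span_outer_eq, finrank_self_adjoint] at h1
    rw [h1, Set.toFinset_card]
  let e : Fin (d ^ 2) ≃ s := (Fintype.equivFinOfCardEq hcard).symm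
  have hchoice : ∀ i : Fin (d ^ 2), ∃ x, outer x = (e i : Matrix (Fin d) (Fin d) ℂ) :=
    fun i => hsub (e i).2
  choose ψ hψ using hchoice
  refine ⟨ψ, ?_⟩
  have : (fun i => outer (ψ i)) = (fun x : s => (x : Matrix (Fin d) (Fin d) ℂ)) ∘ e := by
    funext i; exact hψ i
  rw [this]
  exact hli.comp e e.injective

/-! ### The main characterization -/

lemma mem_S_iff (φ : Fin (d ^ 2) → EuclideanSpace ℂ (Fin d)) :
    Submodule.span ℝ (Set.range fun i => outer (φ i)) =
        selfAdjoint.submodule ℝ (Matrix (Fin d) (Fin d) ℂ)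
      ↔ LinearIndependent ℝ (fun i => outer (φ i)) := by
  constructor
  · intro h
    rw [linearIndependent_iff_card_eq_finrank_span, Set.finrank, h,
      finrank_self_adjoint, Fintype.card_fin]
  · intro h
    have hle : Submodule.span ℝ (Set.range fun i => outer (φ i)) ≤
        selfAdjoint.submodule ℝ (Matrix (Fin d) (Fin d) ℂ) := by
      rw [Submodule.span_le]
      rintro A ⟨i, rfl⟩
      exact outer_mem (φ i)
    refine Submodule.eq_of_le_of_finrank_le hle ?_
    rw [finrank_self_adjoint, finrank_span_eq_card h, Fintype.card_fin]

/-! ### Transfer of linear independence to a plain pi type -/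

noncomputable def mEquiv : Matrix (Fin d) (Fin d) ℂ ≃ₗ[ℝ] (Fin d → Fin d → ℂ) where
  toFun A := fun j k => A j k
  invFun f := Matrix.of f
  map_add' _ _ := rfl
  map_smul' _ _ := rfl
  left_inv _ := rfl
  right_inv _ := rfl

lemma li_iff_pi (g : Fin n → Matrix (Fin d) (Fin d) ℂ) :
    LinearIndependent ℝ (fun i => (mEquiv (g i) : Fin d → Fin d → ℂ))
      ↔ LinearIndependent ℝ g := by
  have : (fun i => mEquiv (g i)) = mEquiv.toLinearMap ∘ g := rfl
  rw [this]
  exact mEquiv.toLinearMap.linearIndependent_iff (LinearMap.ker_eq_bot_of_injective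
    mEquiv.injective)

end Stmt1Aux

open Stmt1Aux in
/-- The set of `d²`-tuples of vectors in `ℂ^d` whose outer products span the real
vector space of `d × d` Hermitian matrices is open and dense. -/
theorem stmt1 (d : ℕ) :
    IsOpen {φ : Fin (d ^ 2) → EuclideanSpace ℂ (Fin d) |
        Submodule.span ℝ (Set.range fun i => outer (φ i)) =
          selfAdjoint.submodule ℝ (Matrix (Fin d) (Fin d) ℂ)} ∧
    Dense {φ : Fin (d ^ 2) → EuclideanSpace ℂ (Fin d) |
        Submodule.span ℝ (Set.range fun i => outer (φ i)) =
          selfAdjoint.submodule ℝ (Matrix (Fin d) (Fin d) ℂ)} := by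
  have hSeq : {φ : Fin (d ^ 2) → EuclideanSpace ℂ (Fin d) |
        Submodule.span ℝ (Set.range fun i => outer (φ i)) =
          selfAdjoint.submodule ℝ (Matrix (Fin d) (Fin d) ℂ)}
      = {φ : Fin (d ^ 2) → EuclideanSpace ℂ (Fin d) |
          LinearIndependent ℝ (fun i => outer (φ i))} := by
    ext φ; exact mem_S_iff φ
  rw [hSeq]
  constructor
  · -- openness
    have hcont : Continuous (fun (φ : Fin (d ^ 2) → EuclideanSpace ℂ (Fin d)) =>
        fun i => (mEquiv (outer (φ i)) : Fin d → Fin d → ℂ)) := by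
      refine continuous_pi fun i => continuous_pi fun j => continuous_pi fun k => ?_
      show Continuous fun (φ : Fin (d ^ 2) → EuclideanSpace ℂ (Fin d)) => φ i j * starRingEnd ℂ (φ i k)
      have hj : Continuous fun (φ : Fin (d ^ 2) → EuclideanSpace ℂ (Fin d)) => φ i j :=
        (EuclideanSpace.proj j).continuous.comp (continuous_apply i)
      have hk : Continuous fun (φ : Fin (d ^ 2) → EuclideanSpace ℂ (Fin d)) =>
          starRingEnd ℂ (φ i k) :=
        Complex.continuous_conj.comp ((EuclideanSpace.proj k).continuous.comp
          (continuous_apply i))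
      exact hj.mul hk
    have : {φ : Fin (d ^ 2) → EuclideanSpace ℂ (Fin d) |
          LinearIndependent ℝ (fun i => outer (φ i))}
        = (fun (φ : Fin (d ^ 2) → EuclideanSpace ℂ (Fin d)) =>
            fun i => (mEquiv (outer (φ i)) : Fin d → Fin d → ℂ)) ⁻¹'
          {f : Fin (d ^ 2) → (Fin d → Fin d → ℂ) | LinearIndependent ℝ f} := by
      ext φ
      exact (li_iff_pi (fun i => outer (φ i))).symm
    rw [this]
    exact isOpen_setOf_linearIndependent.preimage hcont
  · -- density
    obtain ⟨ψ, hψ⟩ := exists_good (d := d)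
    rw [dense_iff_closure_eq, Set.eq_univ_iff_forall]
    intro φ
    set b : Fin (d ^ 2) → EuclideanSpace ℂ (Fin d) := fun i => ψ i - φ i with hb
    set q : Polynomial ℂ := (pmat φ b).det with hq
    have hq1 : q.eval ((1 : ℝ) : ℂ) ≠ 0 := by
      rw [hq, pmat_det_eval]
      have : (fun i => φ i + (1 : ℝ) • b i) = ψ := by
        funext i
        rw [hb]
        simp
      rw [this]
      exact_mod_cast fun h => ((gram_det_ne_zero_iff ψ).mpr hψ) (Complex.ofReal_eq_zero.mp h)
    have hqne : q ≠ 0 := fun h => hq1 (by rw [h, eval_zero])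
    have hroots : {t : ℝ | q.eval (t : ℂ) = 0}.Finite := by
      have : {t : ℝ | q.eval (t : ℂ) = 0}
          = ((↑) : ℝ → ℂ) ⁻¹' {z : ℂ | q.IsRoot z} := rfl
      rw [this]
      exact Set.Finite.preimage (Set.injOn_of_injective Complex.ofReal_injective)
        (Polynomial.finite_setOf_isRoot hqne)
    have hdense : Dense {t : ℝ | q.eval (t : ℂ) = 0}ᶜ :=
      Set.Countable.dense_compl ℝ hroots.countable
    set f : ℝ → (Fin (d ^ 2) → EuclideanSpace ℂ (Fin d)) :=
      fun t => fun i => φ i + t • b i with hf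
    have hfc : Continuous f := by
      refine continuous_pi fun i => ?_
      exact continuous_const.add (continuous_id.smul continuous_const)
    have hf0 : f 0 = φ := by
      funext i
      rw [hf]
      simp
    have himg : f '' {t : ℝ | q.eval (t : ℂ) = 0}ᶜ ⊆
        {φ : Fin (d ^ 2) → EuclideanSpace ℂ (Fin d) |
          LinearIndependent ℝ (fun i => outer (φ i))} := by
      rintro _ ⟨t, ht, rfl⟩
      have hgd : (gram (fun i => φ i + t • b i)).det ≠ 0 := by
        intro h0
        apply ht
        show q.eval (t : ℂ) = 0
        rw [hq, pmat_det_eval, h0, Complex.ofReal_zero]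
      exact (gram_det_ne_zero_iff _).mp hgd
    have h0cl : (0 : ℝ) ∈ closure {t : ℝ | q.eval (t : ℂ) = 0}ᶜ := hdense 0
    have : φ ∈ f '' closure {t : ℝ | q.eval (t : ℂ) = 0}ᶜ := ⟨0, h0cl, hf0⟩
    exact closure_mono himg (image_closure_subset_closure_image hfc this)
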